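/- Let d, K, N be positive integers with K ≤ d and N ≥ 2, and let X_1, …, X_N ∈ ℂ^{d×K} be matrices with orthonormal columns (X_nᴴ X_n = I_K for each n). If K − ‖X_mᴴ X_n‖_F² ≥ (K(d − K)/d) · (N/(N − 1)) for all m ≠ n (i.e., the Rankin bound for the chordal distance is attained), then all pairs of subspaces are equidistant: ‖X_mᴴ X_n‖_F² = K − (K(d − K)/d) · (N/(N − 1)) for every pair m ≠ n. -/

import Mathlib

open scoped Matrix
open Finset

noncomputable def frobNormSq {m n : Type*} [Fintype m] [Fintype n]
    (A : Matrix m n ℂ) : ℝ :=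
  ∑ i, ∑ j, ‖A i j‖ ^ 2

lemma frob_eq_trace {m n : Type*} [Fintype m] [Fintype n] [DecidableEq n]
    (A : Matrix m n ℂ) : (Matrix.trace (Aᴴ * A)) = (frobNormSq A : ℂ) := by
  simp only [Matrix.trace, Matrix.diag, Matrix.mul_apply, Matrix.conjTranspose_apply,
    frobNormSq]
  push_cast
  rw [Finset.sum_comm]
  congr 1; ext i; congr 1; ext j
  rw [show star (A i j) = (starRingEnd ℂ) (A i j) from rfl,
    ← Complex.normSq_eq_conj_mul_self]
  norm_cast
  rw [← Complex.sq_norm]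

theorem rankin_bound_chordal_equality_equidistant (d K N : ℕ) (hd : 0 < d) (hK : 0 < K)
    (hKd : K ≤ d) (hN : 2 ≤ N) (X : Fin N → Matrix (Fin d) (Fin K) ℂ)
    (hX : ∀ n, (X n)ᴴ * X n = 1)
    (hbound : ∀ m n : Fin N, m ≠ n →
      (K : ℝ) - frobNormSq ((X m)ᴴ * X n) ≥
        ((K : ℝ) * ((d : ℝ) - K) / d) * ((N : ℝ) / ((N : ℝ) - 1))) :
    ∀ m n : Fin N, m ≠ n →
      frobNormSq ((X m)ᴴ * X n) =
        (K : ℝ) - ((K : ℝ) * ((d : ℝ) - K) / d) * ((N : ℝ) / ((N : ℝ) - 1)) := by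
  set f : Fin N → Fin N → ℝ := fun m n => frobNormSq ((X m)ᴴ * X n) with hf
  set c : ℝ := (K : ℝ) - ((K : ℝ) * ((d : ℝ) - K) / d) * ((N : ℝ) / ((N : ℝ) - 1)) with hc
  -- diagonal value
  have hdiag : ∀ n, f n n = K := by
    intro n
    have h1 : ((frobNormSq ((X n)ᴴ * X n) : ℝ) : ℂ) = (K : ℂ) := by
      rw [← frob_eq_trace, hX n]
      simp [Matrix.conjTranspose_one, hX n, Matrix.trace_one]
    have := Complex.ofReal_inj.mp (by push_cast at h1 ⊢; exact h1)
    simpa [hf] using this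
  -- the sum matrix
  set S : Matrix (Fin d) (Fin d) ℂ := ∑ n, X n * (X n)ᴴ with hS
  have hSH : Sᴴ = S := by
    rw [hS]
    simp [Matrix.conjTranspose_sum, Matrix.conjTranspose_mul]
  -- trace S = N * K
  have htr : Matrix.trace S = (N : ℂ) * K := by
    rw [hS, Matrix.trace_sum]
    have : ∀ n : Fin N, Matrix.trace (X n * (X n)ᴴ) = (K : ℂ) := by
      intro n
      rw [Matrix.trace_mul_comm, hX n, Matrix.trace_one]
      simp
    simp [this, Finset.sum_const]
  -- total sum of f equals frobNormSq S
  have htotal : ∑ m, ∑ n, f m n = frobNormSq S := by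
    have h1 : Matrix.trace (Sᴴ * S) = ∑ m, ∑ n,
        Matrix.trace (((X m)ᴴ * X n)ᴴ * ((X m)ᴴ * X n)) := by
      rw [hSH, hS, Finset.sum_mul_sum]
      rw [Matrix.trace_sum]
      congr 1; ext m
      rw [Matrix.trace_sum]
      congr 1; ext n
      have e1 : (X m * (X m)ᴴ) * (X n * (X n)ᴴ) = (X m * (X m)ᴴ * X n) * (X n)ᴴ := by
        exact (Matrix.mul_assoc (X m * (X m)ᴴ) (X n) ((X n)ᴴ)).symm
      rw [e1, Matrix.trace_mul_comm]
      simp only [Matrix.conjTranspose_mul, Matrix.conjTranspose_conjTranspose,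
        ← Matrix.mul_assoc]
    have h2 : ((∑ m, ∑ n, f m n : ℝ) : ℂ) = ((frobNormSq S : ℝ) : ℂ) := by
      rw [← frob_eq_trace, h1]
      push_cast
      congr 1; ext m; congr 1; ext n
      rw [frob_eq_trace]
    exact_mod_cast h2
  -- Cauchy-Schwarz lower bound on frobNormSq S
  have hcs : (N : ℝ) * K * ((N : ℝ) * K) / d ≤ frobNormSq S := by
    have hretr : ∑ i, (S i i).re = (N : ℝ) * K := by
      have := congrArg Complex.re htr
      simpa [Matrix.trace, Matrix.diag, Complex.re_sum] using this
    have h1 : (∑ i, (S i i).re) ^ 2 ≤ (d : ℝ) * ∑ i, (S i i).re ^ 2 := by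
      simpa using sq_sum_le_card_mul_sum_sq (s := Finset.univ)
        (f := fun i : Fin d => (S i i).re)
    have h2 : ∑ i, (S i i).re ^ 2 ≤ frobNormSq S := by
      rw [frobNormSq]
      apply Finset.sum_le_sum
      intro i _
      calc (S i i).re ^ 2 ≤ ‖S i i‖ ^ 2 := by
            have := Complex.abs_re_le_norm (S i i)
            have h0 : |(S i i).re| ^ 2 = (S i i).re ^ 2 := sq_abs _
            rw [← h0]
            apply pow_le_pow_left₀ (abs_nonneg _) _ 2
            simpa using this
        _ ≤ ∑ j, ‖S i j‖ ^ 2 := by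
            apply Finset.single_le_sum (f := fun j => ‖S i j‖ ^ 2)
              (fun j _ => by positivity) (Finset.mem_univ i)
    rw [hretr] at h1
    rw [div_le_iff₀ (by positivity)]
    calc (N:ℝ) * K * ((N:ℝ)*K) = ((N:ℝ)*K)^2 := by ring
      _ ≤ (d:ℝ) * ∑ i, (S i i).re ^ 2 := h1
      _ ≤ frobNormSq S * d := by
          rw [mul_comm]
          exact mul_le_mul_of_nonneg_right h2 (by positivity)
  -- split the total sum
  set T : ℝ := ∑ m, ∑ n ∈ Finset.univ.erase m, f m n with hT
  have hsplit : ∑ m, ∑ n, f m n = T + (N : ℝ) * K := by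
    have h1 : ∀ m : Fin N, (∑ n, f m n) = (∑ n ∈ Finset.univ.erase m, f m n) + (K : ℝ) := by
      intro m
      rw [← Finset.sum_erase_add Finset.univ _ (Finset.mem_univ m), hdiag]
    calc ∑ m, ∑ n, f m n = ∑ m : Fin N, ((∑ n ∈ Finset.univ.erase m, f m n) + (K : ℝ)) := by
          simp only [h1]
      _ = T + (N : ℝ) * K := by
          rw [Finset.sum_add_distrib, hT]
          simp [Finset.card_univ, mul_comm]
  -- bounds on T
  have hfle : ∀ m n : Fin N, m ≠ n → f m n ≤ c := by
    intro m n hmn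
    have := hbound m n hmn
    rw [hc]; linarith
  have hcast : ((N - 1 : ℕ) : ℝ) = (N : ℝ) - 1 := by
    have h1 : 1 ≤ N := by omega
    push_cast [h1]
    ring
  have hTle : T ≤ (N : ℝ) * ((N : ℝ) - 1) * c := by
    rw [hT]
    have hineq : ∀ m : Fin N, ∑ n ∈ Finset.univ.erase m, f m n ≤ ((N : ℝ) - 1) * c := by
      intro m
      have h := Finset.sum_le_card_nsmul (Finset.univ.erase m) (f m) c
        (fun n hn => hfle m n (fun e => (Finset.mem_erase.mp hn).1 e.symm))
      rw [Finset.card_erase_of_mem (Finset.mem_univ m), Finset.card_univ,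
        Fintype.card_fin, nsmul_eq_mul, hcast] at h
      exact h
    calc ∑ m, ∑ n ∈ Finset.univ.erase m, f m n ≤ ∑ _m : Fin N, ((N : ℝ) - 1) * c :=
          Finset.sum_le_sum (fun m _ => hineq m)
      _ = (N : ℝ) * ((N : ℝ) - 1) * c := by
          rw [Finset.sum_const, Finset.card_univ, Fintype.card_fin, nsmul_eq_mul]
          ring
  have hNd : (N : ℝ) * K * ((N : ℝ) * K) / d - (N : ℝ) * K = (N : ℝ) * ((N : ℝ) - 1) * c := by
    have hd' : (d : ℝ) ≠ 0 := by positivity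
    have hN1 : (N : ℝ) - 1 ≠ 0 := by
      have : (2 : ℝ) ≤ (N : ℝ) := by exact_mod_cast hN
      linarith
    rw [hc]
    field_simp
    ring
  have hTge : (N : ℝ) * ((N : ℝ) - 1) * c ≤ T := by
    rw [← hNd]
    have := hcs
    rw [htotal] at hsplit
    linarith
  have hTeq : T = (N : ℝ) * ((N : ℝ) - 1) * c := le_antisymm hTle hTge
  -- conclude each term equals c
  have hzero : ∑ m, ∑ n ∈ Finset.univ.erase m, (c - f m n) = 0 := by
    have e : ∑ m, ∑ n ∈ Finset.univ.erase m, (c - f m n)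
        = (∑ _m : Fin N, ((N : ℝ) - 1) * c) - T := by
      rw [hT, ← Finset.sum_sub_distrib]
      congr 1; ext m
      rw [Finset.sum_sub_distrib, Finset.sum_const,
        Finset.card_erase_of_mem (Finset.mem_univ m), Finset.card_univ,
        Fintype.card_fin, nsmul_eq_mul, hcast]
    rw [e, hTeq, Finset.sum_const, Finset.card_univ, Fintype.card_fin, nsmul_eq_mul]
    ring
  intro m n hmn
  have h := (Finset.sum_eq_zero_iff_of_nonneg (fun m _ => Finset.sum_nonneg
      (fun n hn => sub_nonneg.mpr (hfle m n (by
        rintro rfl; exact (Finset.mem_erase.mp hn).1 rfl))))).mp hzero m (Finset.mem_univ m)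
  have h2 := (Finset.sum_eq_zero_iff_of_nonneg (fun n hn => sub_nonneg.mpr (hfle m n (by
        rintro rfl; exact (Finset.mem_erase.mp hn).1 rfl)))).mp h n
      (Finset.mem_erase.mpr ⟨fun e => hmn e.symm, Finset.mem_univ n⟩)
  have : f m n = c := by linarith [sub_eq_zero.mp h2]
  simpa [hf, hc] using this
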